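/- Let ψ(·, λ) = θ(·, λ) + m(λ)φ(·, λ) and ψ(·, λ') = θ(·, λ') + m(λ')φ(·, λ') be Weyl solutions with lim_{X→b}[ψ(·,λ), ψ(·,λ')](X) = 0, where [u, v] = p(uv' − vu'). Then (λ' − λ)∫_a^b ψ(x, λ)ψ(x, λ')w(x) dx = m(λ) − m(λ'). -/
import Mathlib


open MeasureTheory Filter

/-- For Weyl solutions `ψ(·,λ) = θ(·,λ) + m(λ)φ(·,λ)` and `ψ(·,λ') = θ(·,λ') + m(λ')φ(·,λ')`
with `lim_{X→b} [ψ(·,λ), ψ(·,λ')](X) = 0` (where `[u,v] = p(uv' - vu')`), one has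
`(λ' - λ) ∫_a^b ψ(x,λ)ψ(x,λ') w dx = m(λ) - m(λ')`. -/
theorem stmt14 (a b : ℝ) (hab : a < b) (p q : ℝ → ℂ) (w : ℝ → ℝ)
    (α lam lam' m1 m2 : ℂ)
    (θ1 θ1' pθ1d φ1 φ1' pφ1d θ2 θ2' pθ2d φ2 φ2' pφ2d : ℝ → ℂ)
    (hw : ∀ x ∈ Set.Ico a b, 0 < w x)
    (hθ1 : ∀ x ∈ Set.Ico a b, HasDerivAt θ1 (θ1' x) x)
    (hpθ1 : ∀ x ∈ Set.Ico a b, HasDerivAt (fun t => p t * θ1' t) (pθ1d x) x)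
    (heqθ1 : ∀ x ∈ Set.Ico a b, -(pθ1d x) + q x * θ1 x = lam * (w x : ℂ) * θ1 x)
    (hφ1 : ∀ x ∈ Set.Ico a b, HasDerivAt φ1 (φ1' x) x)
    (hpφ1 : ∀ x ∈ Set.Ico a b, HasDerivAt (fun t => p t * φ1' t) (pφ1d x) x)
    (heqφ1 : ∀ x ∈ Set.Ico a b, -(pφ1d x) + q x * φ1 x = lam * (w x : ℂ) * φ1 x)
    (hθ2 : ∀ x ∈ Set.Ico a b, HasDerivAt θ2 (θ2' x) x)
    (hpθ2 : ∀ x ∈ Set.Ico a b, HasDerivAt (fun t => p t * θ2' t) (pθ2d x) x)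
    (heqθ2 : ∀ x ∈ Set.Ico a b, -(pθ2d x) + q x * θ2 x = lam' * (w x : ℂ) * θ2 x)
    (hφ2 : ∀ x ∈ Set.Ico a b, HasDerivAt φ2 (φ2' x) x)
    (hpφ2 : ∀ x ∈ Set.Ico a b, HasDerivAt (fun t => p t * φ2' t) (pφ2d x) x)
    (heqφ2 : ∀ x ∈ Set.Ico a b, -(pφ2d x) + q x * φ2 x = lam' * (w x : ℂ) * φ2 x)
    (hθ1a : θ1 a = Complex.cos α) (hpθ1a : p a * θ1' a = Complex.sin α)
    (hφ1a : φ1 a = Complex.sin α) (hpφ1a : p a * φ1' a = -Complex.cos α)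
    (hθ2a : θ2 a = Complex.cos α) (hpθ2a : p a * θ2' a = Complex.sin α)
    (hφ2a : φ2 a = Complex.sin α) (hpφ2a : p a * φ2' a = -Complex.cos α)
    (hbracket : Tendsto (fun X : ℝ => p X *
        ((θ1 X + m1 * φ1 X) * (θ2' X + m2 * φ2' X)
          - (θ2 X + m2 * φ2 X) * (θ1' X + m1 * φ1' X)))
      (nhdsWithin b (Set.Iio b)) (nhds 0))
    (hint : IntegrableOn (fun x => (θ1 x + m1 * φ1 x) * (θ2 x + m2 * φ2 x) * (w x : ℂ))
      (Set.Ico a b)) :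
    (lam' - lam) * ∫ x in Set.Ico a b, (θ1 x + m1 * φ1 x) * (θ2 x + m2 * φ2 x) * (w x : ℂ)
      = m1 - m2 := by
  set f : ℝ → ℂ := fun x => (θ1 x + m1 * φ1 x) * (θ2 x + m2 * φ2 x) * (w x : ℂ) with hf_def
  set F : ℝ → ℂ := fun X =>
      (θ1 X + m1 * φ1 X) * (p X * θ2' X + m2 * (p X * φ2' X))
        - (θ2 X + m2 * φ2 X) * (p X * θ1' X + m1 * (p X * φ1' X)) with hF_def
  -- derivative of F
  have hF' : ∀ x ∈ Set.Ico a b, HasDerivAt F ((lam - lam') * f x) x := by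
    intro x hx
    have hu' : HasDerivAt (fun t => θ1 t + m1 * φ1 t) (θ1' x + m1 * φ1' x) x :=
      (hθ1 x hx).add ((hφ1 x hx).const_mul m1)
    have hv' : HasDerivAt (fun t => θ2 t + m2 * φ2 t) (θ2' x + m2 * φ2' x) x :=
      (hθ2 x hx).add ((hφ2 x hx).const_mul m2)
    have hpu' : HasDerivAt (fun t => p t * θ1' t + m1 * (p t * φ1' t))
        (pθ1d x + m1 * pφ1d x) x := (hpθ1 x hx).add ((hpφ1 x hx).const_mul m1)
    have hpv' : HasDerivAt (fun t => p t * θ2' t + m2 * (p t * φ2' t))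
        (pθ2d x + m2 * pφ2d x) x := (hpθ2 x hx).add ((hpφ2 x hx).const_mul m2)
    have hD : HasDerivAt F
        (((θ1' x + m1 * φ1' x) * (p x * θ2' x + m2 * (p x * φ2' x))
          + (θ1 x + m1 * φ1 x) * (pθ2d x + m2 * pφ2d x))
          - ((θ2' x + m2 * φ2' x) * (p x * θ1' x + m1 * (p x * φ1' x))
          + (θ2 x + m2 * φ2 x) * (pθ1d x + m1 * pφ1d x))) x :=
      (hu'.mul hpv').sub (hv'.mul hpu')
    convert hD using 1
    have e1 := heqθ1 x hx
    have e2 := heqφ1 x hx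
    have e3 := heqθ2 x hx
    have e4 := heqφ2 x hx
    simp only [hf_def]
    linear_combination -((θ2 x + m2 * φ2 x) * e1) - m1 * (θ2 x + m2 * φ2 x) * e2
      + (θ1 x + m1 * φ1 x) * e3 + m2 * (θ1 x + m1 * φ1 x) * e4
  have hFa : F a = m1 - m2 := by
    simp only [hF_def]
    rw [hθ1a, hφ1a, hθ2a, hφ2a, hpθ1a, hpφ1a, hpθ2a, hpφ2a]
    linear_combination (m1 - m2) * Complex.sin_sq_add_cos_sq α
  -- FTC
  have key : ∀ X, a ≤ X → X < b →
      F X = F a + (lam - lam') * ∫ x in Set.Ico a X, f x := by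
    intro X haX hXb
    have hsub : Set.uIcc a X ⊆ Set.Ico a b := by
      rw [Set.uIcc_of_le haX]
      exact fun t ht => ⟨ht.1, lt_of_le_of_lt ht.2 hXb⟩
    have hderiv : ∀ t ∈ Set.uIcc a X, HasDerivAt F ((lam - lam') * f t) t :=
      fun t ht => hF' t (hsub ht)
    have hinteg : IntervalIntegrable (fun t => (lam - lam') * f t) volume a X := by
      rw [intervalIntegrable_iff_integrableOn_Ioc_of_le haX]
      exact (hint.mono_set (fun t ht => ⟨le_of_lt ht.1, lt_of_le_of_lt ht.2 hXb⟩)).const_mul _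
    have hftc := intervalIntegral.integral_eq_sub_of_hasDerivAt hderiv hinteg
    rw [intervalIntegral.integral_const_mul] at hftc
    rw [MeasureTheory.integral_Ico_eq_integral_Ioo, ← MeasureTheory.integral_Ioc_eq_integral_Ioo,
      ← intervalIntegral.integral_of_le haX]
    linear_combination -hftc
  -- exhausting sequence
  set X : ℕ → ℝ := fun n => b - (b - a) / (n + 1) with hX_def
  have hpos : ∀ n : ℕ, (0:ℝ) < (n:ℝ) + 1 := fun n => by positivity
  have hX_lt : ∀ n, X n < b := fun n =>
    sub_lt_self b (div_pos (sub_pos.2 hab) (hpos n))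
  have hX_ge : ∀ n, a ≤ X n := by
    intro n
    have : (b - a) / ((n:ℝ) + 1) ≤ b - a :=
      div_le_self (le_of_lt (sub_pos.2 hab)) (by have : (0:ℝ) ≤ (n:ℝ) := Nat.cast_nonneg n; linarith)
    simp only [hX_def]
    linarith
  have hX_tendsto : Tendsto X atTop (nhdsWithin b (Set.Iio b)) := by
    apply tendsto_nhdsWithin_of_tendsto_nhds_of_eventually_within
    · have h0 : Tendsto (fun n : ℕ => (b - a) * (1 / ((n:ℝ) + 1))) atTop (nhds ((b - a) * 0)) :=
        tendsto_one_div_add_atTop_nhds_zero_nat.const_mul _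
      have h1 : Tendsto X atTop (nhds (b - (b - a) * 0)) := by
        apply Tendsto.const_sub
        convert h0 using 2 with n
        field_simp
      simpa using h1
    · exact Filter.Eventually.of_forall (fun n => hX_lt n)
  have hmono : Monotone fun n => Set.Ico a (X n) := by
    intro m n hmn
    apply Set.Ico_subset_Ico le_rfl
    have : (b - a) / ((n:ℝ) + 1) ≤ (b - a) / ((m:ℝ) + 1) := by
      apply div_le_div_of_nonneg_left (le_of_lt (sub_pos.2 hab)) (hpos m)
      have := Nat.cast_le (α := ℝ).2 hmn
      linarith
    simp only [hX_def]
    linarith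
  have hunion : (⋃ n, Set.Ico a (X n)) = Set.Ico a b := by
    ext t
    simp only [Set.mem_iUnion, Set.mem_Ico]
    constructor
    · rintro ⟨n, h1, h2⟩
      exact ⟨h1, lt_of_lt_of_le h2 (le_of_lt (hX_lt n))⟩
    · rintro ⟨h1, h2⟩
      obtain ⟨n, hn⟩ := exists_nat_gt ((b - a) / (b - t))
      refine ⟨n, h1, ?_⟩
      have hbt : (0:ℝ) < b - t := by linarith
      have h3 : (b - a) / (b - t) < (n:ℝ) + 1 := by linarith
      have h4 : b - a < ((n:ℝ) + 1) * (b - t) := by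
        rwa [div_lt_iff₀ hbt] at h3
      have h5 : (b - a) / ((n:ℝ) + 1) < b - t := by
        rw [div_lt_iff₀ (hpos n)]
        linarith
      simp only [hX_def]
      linarith
  have hIlim : Tendsto (fun n => ∫ x in Set.Ico a (X n), f x) atTop
      (nhds (∫ x in Set.Ico a b, f x)) := by
    have := MeasureTheory.tendsto_setIntegral_of_monotone
      (fun n => measurableSet_Ico) hmono (hunion ▸ hint)
    rwa [hunion] at this
  have hFtend : Tendsto F (nhdsWithin b (Set.Iio b)) (nhds 0) := by
    apply hbracket.congr
    intro Y
    simp only [hF_def]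
    ring
  have hFlim : Tendsto (fun n => F (X n)) atTop (nhds 0) := hFtend.comp hX_tendsto
  have hFlim' : Tendsto (fun n => F (X n)) atTop
      (nhds (F a + (lam - lam') * ∫ x in Set.Ico a b, f x)) := by
    have : (fun n => F (X n))
        = fun n => F a + (lam - lam') * ∫ x in Set.Ico a (X n), f x := by
      funext n
      exact key (X n) (hX_ge n) (hX_lt n)
    rw [this]
    exact tendsto_const_nhds.add (hIlim.const_mul _)
  have huniq : (0:ℂ) = F a + (lam - lam') * ∫ x in Set.Ico a b, f x :=
    tendsto_nhds_unique hFlim hFlim'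
  rw [hFa] at huniq
  linear_combination huniq
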